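/- For positive real numbers x_1, ..., x_n, equality holds in the inequality Σ_{i_1<...<i_k} x_{i_1}···x_{i_k} ≤ C(n,k)·((x_1+···+x_n)/n)^k (for some fixed k with 2 ≤ k ≤ n) if and only if x_1 = x_2 = ··· = x_n. -/

import Mathlib

open Multiset

-- strict Bernoulli
lemma bern_strict : ∀ k : ℕ, 2 ≤ k → ∀ b : ℝ, -1 < b → b ≠ 0 → 1 + k * b < (1 + b) ^ k := by
  intro k
  induction k with
  | zero => intro h; omega
  | succ k ih =>
    intro hk b hb hb0
    rcases Nat.lt_or_ge k 2 with hk2 | hk2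
    · interval_cases k
      · omega
      · push_cast
        nlinarith [sq_pos_of_ne_zero hb0, sq_nonneg b]
    · have h1 : (0:ℝ) < 1 + b := by linarith
      have h2 := ih hk2 b hb hb0
      have h3 : (1 + (k:ℝ) * b) * (1 + b) < (1 + b) ^ k * (1 + b) :=
        mul_lt_mul_of_pos_right h2 h1
      have hkpos : (0:ℝ) ≤ (k:ℝ) := by positivity
      calc (1:ℝ) + (k+1 : ℕ) * b ≤ (1 + (k:ℝ)*b) * (1+b) := by
            push_cast; nlinarith [sq_nonneg b]
        _ < (1+b)^k * (1+b) := h3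
        _ = (1+b)^(k+1) := by rw [pow_succ]

lemma tangent_le {a m : ℝ} (ha : 0 < a) (hm : 0 < m) {k : ℕ} (hk : 2 ≤ k) :
    a ^ k + k * a ^ (k-1) * (m - a) ≤ m ^ k := by
  rcases eq_or_ne m a with rfl | hne
  · simp
  · have hb : -1 < m / a - 1 := by
      have : 0 < m / a := div_pos hm ha
      linarith
    have hb0 : m / a - 1 ≠ 0 := by
      intro h
      apply hne
      field_simp at h
      linarith
    have := bern_strict k hk _ hb hb0
    have h1 : (1 + (m/a - 1)) = m / a := by ring
    rw [h1] at this
    have h2 : (m/a)^k = m^k / a^k := div_pow m a k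
    rw [h2] at this
    have hak : (0:ℝ) < a ^ k := pow_pos ha k
    have h3 : (1 + (k:ℝ) * (m/a - 1)) * a^k < m ^ k := by
      rw [← lt_div_iff₀ hak] ; exact this
    refine le_of_lt (lt_of_le_of_lt (le_of_eq ?_) h3)
    have hA : a ^ k = a ^ (k-1) * a := by
      conv_lhs => rw [show k = (k-1)+1 by omega, pow_succ]
    rw [hA]
    field_simp

lemma tangent_lt {a m : ℝ} (ha : 0 < a) (hm : 0 < m) (hne : m ≠ a) {k : ℕ} (hk : 2 ≤ k) :
    a ^ k + k * a ^ (k-1) * (m - a) < m ^ k := by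
  have hb : -1 < m / a - 1 := by
    have : 0 < m / a := div_pos hm ha
    linarith
  have hb0 : m / a - 1 ≠ 0 := by
    intro h
    apply hne
    field_simp at h
    linarith
  have := bern_strict k hk _ hb hb0
  have h1 : (1 + (m/a - 1)) = m / a := by ring
  rw [h1] at this
  rw [div_pow m a k] at this
  have hak : (0:ℝ) < a ^ k := pow_pos ha k
  have h3 : (1 + (k:ℝ) * (m/a - 1)) * a^k < m ^ k := by
    rw [← lt_div_iff₀ hak]; exact this
  refine lt_of_le_of_lt (le_of_eq ?_) h3
  have hA : a ^ k = a ^ (k-1) * a := by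
    conv_lhs => rw [show k = (k-1)+1 by omega, pow_succ]
  rw [hA]; field_simp

lemma choose_id1 {n k : ℕ} (hk : 1 ≤ k) (hn : 1 ≤ n) :
    ((k:ℝ)) * (n.choose k) = n * ((n-1).choose (k-1)) := by
  obtain ⟨m, rfl⟩ : ∃ m, n = m + 1 := ⟨n-1, by omega⟩
  obtain ⟨j, rfl⟩ : ∃ j, k = j + 1 := ⟨k-1, by omega⟩
  simp only [Nat.add_sub_cancel]
  have h : (m+1) * Nat.choose m j = Nat.choose (m+1) (j+1) * (j+1) := Nat.add_one_mul_choose_eq m j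
  have h' : (j+1) * Nat.choose (m+1) (j+1) = (m+1) * Nat.choose m j := by
    rw [Nat.mul_comm]; exact h.symm
  exact_mod_cast h'

lemma choose_id2 {n k : ℕ} (hk : 1 ≤ k) (hn : 1 ≤ n) :
    ((n.choose k : ℕ) : ℝ) = ((n-1).choose k) + ((n-1).choose (k-1)) := by
  obtain ⟨m, rfl⟩ : ∃ m, n = m + 1 := ⟨n-1, by omega⟩
  obtain ⟨j, rfl⟩ : ∃ j, k = j + 1 := ⟨k-1, by omega⟩
  simp only [Nat.add_sub_cancel]
  rw [Nat.choose_succ_succ' m j]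
  push_cast; ring

-- the key step identity
lemma step_id {n k : ℕ} (hk : 2 ≤ k) (hkn : k ≤ n) (a b : ℝ) :
    (n.choose k : ℝ) * (a^k + k * a^(k-1) * ((((n:ℝ)-1) * a + b)/n - a))
      = ((n-1).choose k : ℝ) * a^k + b * (((n-1).choose (k-1) : ℝ) * a^(k-1)) := by
  have hn2 : 2 ≤ n := le_trans hk hkn
  have hN : (0:ℝ) < n := by positivity
  have h1 := choose_id1 (by omega : 1 ≤ k) (by omega : 1 ≤ n)
  have h2 := choose_id2 (by omega : 1 ≤ k) (by omega : 1 ≤ n)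
  have hA : a ^ k = a ^ (k-1) * a := by
    conv_lhs => rw [show k = (k-1)+1 by omega, pow_succ]
  field_simp
  linear_combination (a^(k-1) * (b - a)) * h1 + ((n:ℝ) * a^k) * h2 + ((n:ℝ) * (((n-1).choose (k-1) : ℝ))) * hA

lemma step_le {n k : ℕ} (hk : 2 ≤ k) (hkn : k ≤ n) {a b : ℝ} (ha : 0 < a) (hb : 0 < b) :
    ((n-1).choose k : ℝ) * a^k + b * (((n-1).choose (k-1) : ℝ) * a^(k-1))
      ≤ (n.choose k : ℝ) * ((((n:ℝ)-1) * a + b)/n)^k := by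
  have hn2 : 2 ≤ n := le_trans hk hkn
  have hm : 0 < (((n:ℝ)-1) * a + b)/n := by
    apply div_pos _ (by positivity)
    have : (1:ℝ) ≤ (n:ℝ) := by exact_mod_cast Nat.one_le_of_lt hn2
    nlinarith
  rw [← step_id hk hkn a b]
  exact mul_le_mul_of_nonneg_left (tangent_le ha hm hk) (by positivity)

lemma step_lt {n k : ℕ} (hk : 2 ≤ k) (hkn : k ≤ n) {a b : ℝ} (ha : 0 < a) (hb : 0 < b)
    (hne : b ≠ a) :
    ((n-1).choose k : ℝ) * a^k + b * (((n-1).choose (k-1) : ℝ) * a^(k-1))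
      < (n.choose k : ℝ) * ((((n:ℝ)-1) * a + b)/n)^k := by
  have hn2 : 2 ≤ n := le_trans hk hkn
  have hN : (0:ℝ) < n := by positivity
  have h1 : (1:ℝ) ≤ (n:ℝ) := by exact_mod_cast Nat.one_le_of_lt hn2
  have hm : 0 < (((n:ℝ)-1) * a + b)/n := by
    apply div_pos _ hN
    nlinarith
  have hmne : (((n:ℝ)-1) * a + b)/n ≠ a := by
    intro h
    apply hne
    field_simp at h
    linarith
  rw [← step_id hk hkn a b]
  have hcp : (0:ℝ) < (n.choose k : ℝ) := by exact_mod_cast Nat.choose_pos hkn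
  exact mul_lt_mul_of_pos_left (tangent_lt ha hm hmne hk) hcp

lemma esymm_cons (a : ℝ) (s : Multiset ℝ) (k : ℕ) :
    (a ::ₘ s).esymm (k+1) = s.esymm (k+1) + a * s.esymm k := by
  simp only [Multiset.esymm, powersetCard_cons, Multiset.map_add, Multiset.sum_add,
    Multiset.map_map, Function.comp_def, Multiset.prod_cons]
  rw [Multiset.sum_map_mul_left]

lemma esymm_nonneg {s : Multiset ℝ} (h : ∀ y ∈ s, 0 ≤ y) (k : ℕ) : 0 ≤ s.esymm k := by
  apply Multiset.sum_nonneg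
  intro z hz
  obtain ⟨t, ht, rfl⟩ := Multiset.mem_map.mp hz
  exact Multiset.prod_nonneg fun y hy =>
    h y (Multiset.mem_of_le (Multiset.mem_powersetCard.mp ht).1 hy)

lemma esymm_zero_of_lt {s : Multiset ℝ} {k : ℕ} (h : Multiset.card s < k) : s.esymm k = 0 := by
  have hc : Multiset.card (powersetCard k s) = 0 := by
    rw [Multiset.card_powersetCard]
    exact Nat.choose_eq_zero_of_lt h
  rw [Multiset.esymm, Multiset.card_eq_zero.mp hc]
  simp

lemma esymm_one' (s : Multiset ℝ) : s.esymm 1 = s.sum := by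
  simp [Multiset.esymm, powersetCard_one, Multiset.map_map, Function.comp_def]

lemma macA (s : Multiset ℝ) : (∀ y ∈ s, 0 < y) → ∀ k : ℕ, 1 ≤ k → k ≤ Multiset.card s →
    s.esymm k ≤ ((Multiset.card s).choose k : ℝ) * (s.sum / Multiset.card s) ^ k := by
  induction s using Multiset.induction_on with
  | empty => intro _ k hk1 hks; simp at hks; omega
  | cons a t ih =>
    intro hpos k hk1 hks
    have ha : 0 < a := hpos a (Multiset.mem_cons_self a t)
    have hpos' : ∀ y ∈ t, 0 < y := fun y hy => hpos y (Multiset.mem_cons_of_mem hy)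
    rw [Multiset.card_cons] at hks ⊢
    have hn0 : ((Multiset.card t : ℝ) + 1) ≠ 0 := by positivity
    rcases eq_or_lt_of_le hk1 with h1 | hk2
    · -- k = 1
      rw [← h1, esymm_one', Nat.choose_one_right, pow_one, Multiset.sum_cons]
      push_cast
      rw [mul_div_cancel₀ _ hn0]
    · have hk2 : 2 ≤ k := hk2
      -- t is nonempty
      have hct : 1 ≤ Multiset.card t := by omega
      have ht0 : t ≠ 0 := by
        intro h; rw [h] at hct; simp at hct
      obtain ⟨y0, hy0⟩ := Multiset.exists_mem_of_ne_zero ht0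
      have htsum : 0 < t.sum :=
        lt_of_lt_of_le (hpos' y0 hy0)
          (Multiset.single_le_sum (fun y hy => (hpos' y hy).le) y0 hy0)
      set a' : ℝ := t.sum / Multiset.card t with ha'def
      have hctR : (0:ℝ) < Multiset.card t := by exact_mod_cast hct
      have ha' : 0 < a' := div_pos htsum hctR
      have IHk : t.esymm k ≤ ((Multiset.card t).choose k : ℝ) * a' ^ k := by
        rcases le_or_gt k (Multiset.card t) with h | h
        · exact ih hpos' k (by omega) h
        · rw [esymm_zero_of_lt h, Nat.choose_eq_zero_of_lt h]
          simp
      have IHk1 : t.esymm (k-1) ≤ ((Multiset.card t).choose (k-1) : ℝ) * a' ^ (k-1) :=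
        ih hpos' (k-1) (by omega) (by omega)
      have hEcons : (a ::ₘ t).esymm k = t.esymm k + a * t.esymm (k-1) := by
        conv_lhs => rw [show k = (k-1)+1 by omega]
        rw [esymm_cons, show (k-1)+1 = k by omega]
      have hchain : (a ::ₘ t).esymm k
          ≤ ((Multiset.card t).choose k : ℝ) * a' ^ k
            + a * (((Multiset.card t).choose (k-1) : ℝ) * a' ^ (k-1)) := by
        rw [hEcons]
        exact add_le_add IHk (mul_le_mul_of_nonneg_left IHk1 ha.le)
      have hstep := step_le (n := Multiset.card t + 1) hk2 hks ha' ha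
      rw [Nat.add_sub_cancel] at hstep
      refine le_trans hchain (le_trans hstep (le_of_eq ?_))
      have hma : ((Multiset.card t + 1 : ℕ):ℝ) - 1 = (Multiset.card t : ℝ) := by push_cast; ring
      rw [hma]
      have : (Multiset.card t : ℝ) * a' = t.sum := by
        rw [ha'def, mul_div_cancel₀ _ (ne_of_gt hctR)]
      rw [this, Multiset.sum_cons]
      push_cast
      ring_nf

lemma macB (s : Multiset ℝ) : (∀ y ∈ s, 0 < y) → ∀ k : ℕ, 2 ≤ k → k ≤ Multiset.card s →
    s.esymm k = ((Multiset.card s).choose k : ℝ) * (s.sum / Multiset.card s) ^ k →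
    ∀ y ∈ s, ∀ z ∈ s, y = z := by
  induction s using Multiset.induction_on with
  | empty => intro _ k hk2 hks _; simp at hks; omega
  | cons a t ih =>
    intro hpos k hk2 hks heq
    have ha : 0 < a := hpos a (Multiset.mem_cons_self a t)
    have hpos' : ∀ y ∈ t, 0 < y := fun y hy => hpos y (Multiset.mem_cons_of_mem hy)
    rw [Multiset.card_cons] at hks heq
    have hct : 1 ≤ Multiset.card t := by omega
    have ht0 : t ≠ 0 := by intro h; rw [h] at hct; simp at hct
    obtain ⟨y0, hy0⟩ := Multiset.exists_mem_of_ne_zero ht0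
    have htsum : 0 < t.sum :=
      lt_of_lt_of_le (hpos' y0 hy0)
        (Multiset.single_le_sum (fun y hy => (hpos' y hy).le) y0 hy0)
    set a' : ℝ := t.sum / Multiset.card t with ha'def
    have hctR : (0:ℝ) < Multiset.card t := by exact_mod_cast hct
    have ha' : 0 < a' := div_pos htsum hctR
    have hcta : (Multiset.card t : ℝ) * a' = t.sum := by
      rw [ha'def, mul_div_cancel₀ _ (ne_of_gt hctR)]
    have IHk : t.esymm k ≤ ((Multiset.card t).choose k : ℝ) * a' ^ k := by
      rcases le_or_gt k (Multiset.card t) with h | h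
      · exact macA t hpos' k (by omega) h
      · rw [esymm_zero_of_lt h, Nat.choose_eq_zero_of_lt h]; simp
    have IHk1 : t.esymm (k-1) ≤ ((Multiset.card t).choose (k-1) : ℝ) * a' ^ (k-1) :=
      macA t hpos' (k-1) (by omega) (by omega)
    have hEcons : (a ::ₘ t).esymm k = t.esymm k + a * t.esymm (k-1) := by
      conv_lhs => rw [show k = (k-1)+1 by omega]
      rw [esymm_cons, show (k-1)+1 = k by omega]
    -- rewrite RHS of heq into step form
    have hmrw : (((Multiset.card t + 1 : ℕ):ℝ) - 1) * a' + a
        = (a ::ₘ t).sum := by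
      push_cast
      rw [Multiset.sum_cons]
      rw [show ((Multiset.card t : ℝ) + 1 - 1) = (Multiset.card t : ℝ) by ring, hcta]
      ring
    have hstep := step_le (n := Multiset.card t + 1) hk2 hks ha' ha
    rw [Nat.add_sub_cancel, hmrw] at hstep
    have hchain : (a ::ₘ t).esymm k
        ≤ ((Multiset.card t).choose k : ℝ) * a' ^ k
          + a * (((Multiset.card t).choose (k-1) : ℝ) * a' ^ (k-1)) := by
      rw [hEcons]
      exact add_le_add IHk (mul_le_mul_of_nonneg_left IHk1 ha.le)
    have heq' : (a ::ₘ t).esymm k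
        = ((Multiset.card t + 1 : ℕ).choose k : ℝ)
          * ((a ::ₘ t).sum / ((Multiset.card t + 1 : ℕ) : ℝ)) ^ k := by
      exact_mod_cast heq
    -- both inequalities are equalities
    have hR1R2 : ((Multiset.card t).choose k : ℝ) * a' ^ k
          + a * (((Multiset.card t).choose (k-1) : ℝ) * a' ^ (k-1))
        = ((Multiset.card t + 1 : ℕ).choose k : ℝ)
          * ((a ::ₘ t).sum / ((Multiset.card t + 1 : ℕ) : ℝ)) ^ k := by
      apply le_antisymm hstep
      rw [← heq']
      exact hchain
    have haa' : a = a' := by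
      by_contra hne
      have := step_lt (n := Multiset.card t + 1) hk2 hks ha' ha hne
      rw [Nat.add_sub_cancel, hmrw] at this
      rw [hR1R2] at this
      exact lt_irrefl _ this
    have hEeqR1 : t.esymm k + a * t.esymm (k-1)
        = ((Multiset.card t).choose k : ℝ) * a' ^ k
          + a * (((Multiset.card t).choose (k-1) : ℝ) * a' ^ (k-1)) := by
      rw [← hEcons, heq', hR1R2]
    have e1 : t.esymm k = ((Multiset.card t).choose k : ℝ) * a' ^ k := by
      nlinarith [mul_le_mul_of_nonneg_left IHk1 ha.le]
    have e2 : t.esymm (k-1) = ((Multiset.card t).choose (k-1) : ℝ) * a' ^ (k-1) := by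
      have h3 : a * t.esymm (k-1) = a * (((Multiset.card t).choose (k-1) : ℝ) * a' ^ (k-1)) := by
        linarith
      exact mul_left_cancel₀ (ne_of_gt ha) h3
    -- t is constant
    have htconst : ∀ y ∈ t, ∀ z ∈ t, y = z := by
      rcases eq_or_lt_of_le hct with h1 | h2
      · obtain ⟨b, rfl⟩ := Multiset.card_eq_one.mp h1.symm
        intro y hy z hz
        rw [Multiset.mem_singleton.mp hy, Multiset.mem_singleton.mp hz]
      · rcases le_or_gt k (Multiset.card t) with h | h
        · exact ih hpos' k hk2 h e1
        · have hk1c : k - 1 = Multiset.card t := by omega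
          refine ih hpos' (k-1) (by omega) (by omega) ?_
          exact e2
    -- hence every element of t equals y0, and a = a' = y0
    have hall : ∀ y ∈ t, y = y0 := fun y hy => htconst y hy y0 hy0
    have hsum0 : t.sum = (Multiset.card t : ℝ) * y0 := by
      rw [Multiset.eq_replicate_card.mpr hall, Multiset.sum_replicate, Multiset.card_replicate,
        nsmul_eq_mul]
    have ha'y0 : a' = y0 := by
      rw [ha'def, hsum0, mul_div_cancel_left₀ _ (ne_of_gt hctR)]
    intro y hy z hz
    have key : ∀ w ∈ a ::ₘ t, w = a := by
      intro w hw
      rcases Multiset.mem_cons.mp hw with h | h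
      · exact h
      · rw [hall w h, ← ha'y0, haa']
    rw [key y hy, key z hz]

theorem stmt_4 (n k : ℕ) (hk1 : 2 ≤ k) (hkn : k ≤ n) (x : Fin n → ℝ)
    (hx : ∀ i, 0 < x i) :
    (∑ A ∈ Finset.powersetCard k (Finset.univ : Finset (Fin n)), ∏ i ∈ A, x i =
      (n.choose k : ℝ) * ((∑ i, x i) / n) ^ k) ↔ ∀ i j, x i = x j := by
  have hn0 : 0 < n := by omega
  set s : Multiset ℝ := Multiset.map x Finset.univ.val with hs
  have hcard : Multiset.card s = n := by simp [hs]
  have hsum : s.sum = ∑ i, x i := rfl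
  have hesymm : s.esymm k
      = ∑ A ∈ Finset.powersetCard k (Finset.univ : Finset (Fin n)), ∏ i ∈ A, x i :=
    Finset.esymm_map_val x Finset.univ k
  constructor
  · intro h i j
    have hpos : ∀ y ∈ s, 0 < y := by
      intro y hy
      obtain ⟨i, _, rfl⟩ := Multiset.mem_map.mp hy
      exact hx i
    have := macB s hpos k hk1 (by rw [hcard]; exact hkn)
      (by rw [hesymm, hcard, hsum]; exact h)
    exact this (x i) (Multiset.mem_map_of_mem x (Finset.mem_univ_val i))
      (x j) (Multiset.mem_map_of_mem x (Finset.mem_univ_val j))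
  · intro h
    set i0 : Fin n := ⟨0, hn0⟩
    set c := x i0 with hc
    have hxc : ∀ i, x i = c := fun i => h i i0
    have hsum2 : (∑ i, x i) = (n:ℝ) * c := by
      rw [Finset.sum_congr rfl (fun i _ => hxc i), Finset.sum_const, Finset.card_univ,
        Fintype.card_fin, nsmul_eq_mul]
    have hprod : ∀ A ∈ Finset.powersetCard k (Finset.univ : Finset (Fin n)),
        ∏ i ∈ A, x i = c ^ k := by
      intro A hA
      rw [Finset.prod_congr rfl (fun i _ => hxc i), Finset.prod_const,
        Finset.mem_powersetCard_univ.mp hA]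
    rw [Finset.sum_congr rfl hprod, Finset.sum_const, Finset.card_powersetCard,
      Finset.card_univ, Fintype.card_fin, hsum2, nsmul_eq_mul,
      mul_div_cancel_left₀ _ (by exact_mod_cast hn0.ne' : (n:ℝ) ≠ 0)]
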